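/- Fix L₁, L₂ ≥ 1, c ∈ (0,1), δ > 0, and τ ∈ ℝ, ξ, ξ' ∈ ℝ². Let E ⊆ ℝ × ℝ² be the set of (τ₁, ξ₁) such that |ξ₁ − ξ'| ≤ δ, ⟨τ − τ₁ ± c|ξ − ξ₁|⟩ ≤ 2L₁, ⟨τ₁ ± |ξ₁|⟩ ≤ 2L₂, and the direction of ξ₁ makes an angle at most π/A with the positive x-axis where A ≥ 2¹⁰(1−c)^{−1/2} (so that |∂_{(ξ₁)₁}(τ ± |ξ₁| ± c|ξ−ξ₁|)| ≥ (1−c)/2 on E). Then the 3-dimensional Lebesgue measure of E is ≲ δ · L₁ · L₂, with implicit constant depending only on c. -/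

import Mathlib

open MeasureTheory Real

open ENNReal

/-- Japanese bracket `⟨x⟩ = √(1+x²)`. -/
noncomputable def jb (x : ℝ) : ℝ := Real.sqrt (1 + x ^ 2)

noncomputable def e2 (v : ℝ × ℝ) : EuclideanSpace ℝ (Fin 2) :=
  (WithLp.equiv 2 (Fin 2 → ℝ)).symm ![v.1, v.2]

lemma e2_apply_zero (v : ℝ × ℝ) : e2 v 0 = v.1 := rfl
lemma e2_apply_one (v : ℝ × ℝ) : e2 v 1 = v.2 := rfl

lemma norm2 (w : EuclideanSpace ℝ (Fin 2)) : ‖w‖ = Real.sqrt ((w 0)^2 + (w 1)^2) := by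
  rw [EuclideanSpace.norm_eq, Fin.sum_univ_two]
  simp [Real.norm_eq_abs, sq_abs]

lemma sub_apply2 (a b : EuclideanSpace ℝ (Fin 2)) (i : Fin 2) : (a - b) i = a i - b i := rfl

lemma norm_e2 (x y : ℝ) : ‖e2 (x, y)‖ = Real.sqrt (x^2 + y^2) := by
  rw [norm2, e2_apply_zero, e2_apply_one]

lemma norm_e2_sub (x₁ x₂ y : ℝ) : ‖e2 (x₁, y) - e2 (x₂, y)‖ = |x₁ - x₂| := by
  rw [norm2, sub_apply2, sub_apply2, e2_apply_zero, e2_apply_zero, e2_apply_one, e2_apply_one]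
  simp [sqrt_sq_eq_abs]

set_option maxHeartbeats 1000000 in
/-- ordered two-point estimate -/
lemma key_diam' (c θ τ B y : ℝ) (hc0 : 0 < c) (hcos : c < Real.cos θ)
    (s₁ s₂ : ℝ) (hs₁ : s₁ = 1 ∨ s₁ = -1) (hs₂ : s₂ = 1 ∨ s₂ = -1)
    (ξ : EuclideanSpace ℝ (Fin 2)) (x₁ x₂ : ℝ) (hx : x₁ ≤ x₂)
    (ha₁ : ‖e2 (x₁, y)‖ * Real.cos θ ≤ x₁) (ha₂ : ‖e2 (x₂, y)‖ * Real.cos θ ≤ x₂)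
    (hb₁ : |τ + s₂ * ‖e2 (x₁, y)‖ + s₁ * (c * ‖ξ - e2 (x₁, y)‖)| ≤ B)
    (hb₂ : |τ + s₂ * ‖e2 (x₂, y)‖ + s₁ * (c * ‖ξ - e2 (x₂, y)‖)| ≤ B) :
    x₂ - x₁ ≤ 2 * B / (Real.cos θ - c) := by
  set r₁ := ‖e2 (x₁, y)‖ with hr₁
  set r₂ := ‖e2 (x₂, y)‖ with hr₂
  set q₁ := ‖ξ - e2 (x₁, y)‖ with hq₁
  set q₂ := ‖ξ - e2 (x₂, y)‖ with hq₂
  have hmpos : 0 < Real.cos θ - c := by linarith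
  have hr₁0 : 0 ≤ r₁ := norm_nonneg _
  have hr₂0 : 0 ≤ r₂ := norm_nonneg _
  have hr₁sq : r₁^2 = x₁^2 + y^2 := by
    rw [hr₁, norm_e2, sq_sqrt (by positivity)]
  have hr₂sq : r₂^2 = x₂^2 + y^2 := by
    rw [hr₂, norm_e2, sq_sqrt (by positivity)]
  -- Key 1 : cos θ * (x₂ - x₁) ≤ r₂ - r₁
  have key1 : Real.cos θ * (x₂ - x₁) ≤ r₂ - r₁ := by
    rcases eq_or_lt_of_le (by positivity : (0:ℝ) ≤ r₁ + r₂) with h0 | h0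
    · have h1 : r₁ = 0 := by linarith
      have h2 : r₂ = 0 := by linarith
      have hx1 : x₁ = 0 := by nlinarith [sq_nonneg x₁, sq_nonneg y]
      have hx2 : x₂ = 0 := by nlinarith [sq_nonneg x₂, sq_nonneg y]
      rw [hx1, hx2, h1, h2]; simp
    · have hsum : (r₁ + r₂) * Real.cos θ ≤ x₁ + x₂ := by nlinarith
      have hdiff : (r₂ - r₁) * (r₂ + r₁) = (x₂ - x₁) * (x₂ + x₁) := by nlinarith
      have h3 : (x₂ - x₁) * ((r₁ + r₂) * Real.cos θ) ≤ (x₂ - x₁) * (x₁ + x₂) :=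
        mul_le_mul_of_nonneg_left hsum (by linarith)
      nlinarith [h3, hdiff, h0]
  -- Key 2 : |q₂ - q₁| ≤ x₂ - x₁
  have key2 : |q₂ - q₁| ≤ x₂ - x₁ := by
    have := abs_norm_sub_norm_le (ξ - e2 (x₂, y)) (ξ - e2 (x₁, y))
    have heq : (ξ - e2 (x₂, y)) - (ξ - e2 (x₁, y)) = e2 (x₁, y) - e2 (x₂, y) :=
      sub_sub_sub_cancel_left _ _ _
    rw [heq, norm_e2_sub] at this
    have h2 : |x₁ - x₂| = x₂ - x₁ := by
      rw [abs_sub_comm]; exact abs_of_nonneg (by linarith)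
    rw [h2] at this
    exact this
  -- combine
  have hG : |s₂ * (r₂ - r₁) + s₁ * (c * (q₂ - q₁))| ≤ 2 * B := by
    have : s₂ * (r₂ - r₁) + s₁ * (c * (q₂ - q₁)) =
        (τ + s₂ * r₂ + s₁ * (c * q₂)) - (τ + s₂ * r₁ + s₁ * (c * q₁)) := by ring
    rw [this]
    calc _ ≤ |τ + s₂ * r₂ + s₁ * (c * q₂)| + |τ + s₂ * r₁ + s₁ * (c * q₁)| := abs_sub _ _
    _ ≤ 2 * B := by linarith
  have hlow : (Real.cos θ - c) * (x₂ - x₁) ≤ |s₂ * (r₂ - r₁) + s₁ * (c * (q₂ - q₁))| := by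
    have hrr : r₁ ≤ r₂ := by nlinarith [Real.cos_le_one θ]
    have h1 : |s₂ * (r₂ - r₁)| = r₂ - r₁ := by
      rcases hs₂ with h | h
      · rw [h, one_mul, abs_of_nonneg (by linarith)]
      · rw [h, neg_one_mul, abs_neg, abs_of_nonneg (by linarith)]
    have h2 : |s₁ * (c * (q₂ - q₁))| ≤ c * (x₂ - x₁) := by
      have hbase : |c * (q₂ - q₁)| ≤ c * (x₂ - x₁) := by
        rw [abs_mul, abs_of_pos hc0]
        exact mul_le_mul_of_nonneg_left key2 (le_of_lt hc0)
      rcases hs₁ with h | h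
      · rwa [h, one_mul]
      · rwa [h, neg_one_mul, abs_neg]
    calc (Real.cos θ - c) * (x₂ - x₁) = Real.cos θ * (x₂ - x₁) - c * (x₂ - x₁) := by ring
    _ ≤ (r₂ - r₁) - c * (x₂ - x₁) := by linarith
    _ ≤ |s₂ * (r₂ - r₁)| - |s₁ * (c * (q₂ - q₁))| := by rw [h1]; linarith
    _ ≤ _ := by
        have := abs_sub_abs_le_abs_sub (s₂ * (r₂ - r₁)) (-(s₁ * (c * (q₂ - q₁))))
        simp only [abs_neg, sub_neg_eq_add] at this
        exact this
  rw [le_div_iff₀ hmpos]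
  nlinarith [hG, hlow]

lemma e2_mp : MeasurePreserving e2 volume volume := by
  have h : e2 = (⇑(MeasurableEquiv.toLp 2 (Fin 2 → ℝ))) ∘ (⇑(MeasurableEquiv.finTwoArrow (α := ℝ)).symm) := by
    funext v
    simp only [Function.comp_apply, MeasurableEquiv.finTwoArrow_symm_apply,
      MeasurableEquiv.coe_toLp, e2]
    congr 1
  rw [h]
  exact (PiLp.volume_preserving_toLp (Fin 2)).comp
    ((volume_preserving_finTwoArrow ℝ).symm _)

lemma coord_le_norm (w : EuclideanSpace ℝ (Fin 2)) (i : Fin 2) : |w i| ≤ ‖w‖ := by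
  rw [norm2]
  have h0 : (w 0)^2 + (w 1)^2 ≥ (w i)^2 := by
    fin_cases i <;> simp <;> nlinarith [sq_nonneg (w 0), sq_nonneg (w 1)]
  calc |w i| = Real.sqrt ((w i)^2) := (Real.sqrt_sq_eq_abs _).symm
  _ ≤ _ := Real.sqrt_le_sqrt (by linarith)

lemma key_diam (c θ τ B y : ℝ) (hc0 : 0 < c) (hcos : c < Real.cos θ)
    (s₁ s₂ : ℝ) (hs₁ : s₁ = 1 ∨ s₁ = -1) (hs₂ : s₂ = 1 ∨ s₂ = -1)
    (ξ : EuclideanSpace ℝ (Fin 2)) (x₁ x₂ : ℝ)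
    (ha₁ : ‖e2 (x₁, y)‖ * Real.cos θ ≤ x₁) (ha₂ : ‖e2 (x₂, y)‖ * Real.cos θ ≤ x₂)
    (hb₁ : |τ + s₂ * ‖e2 (x₁, y)‖ + s₁ * (c * ‖ξ - e2 (x₁, y)‖)| ≤ B)
    (hb₂ : |τ + s₂ * ‖e2 (x₂, y)‖ + s₁ * (c * ‖ξ - e2 (x₂, y)‖)| ≤ B) :
    |x₂ - x₁| ≤ 2 * B / (Real.cos θ - c) := by
  rcases le_total x₁ x₂ with h | h
  · rw [abs_of_nonneg (by linarith)]
    exact key_diam' c θ τ B y hc0 hcos s₁ s₂ hs₁ hs₂ ξ x₁ x₂ h ha₁ ha₂ hb₁ hb₂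
  · rw [abs_of_nonpos (by linarith), neg_sub]
    exact key_diam' c θ τ B y hc0 hcos s₁ s₂ hs₁ hs₂ ξ x₂ x₁ h ha₂ ha₁ hb₂ hb₁

lemma continuous_jb : Continuous jb := by
  unfold jb
  exact Real.continuous_sqrt.comp (by continuity)

/-- |u| ≤ 2L from jb u ≤ 2L (L ≥ 1/2 suffices; we use positivity of 2L). -/
lemma abs_le_of_jb (u L : ℝ) (hL : 1 ≤ L) (h : jb u ≤ 2 * L) : |u| ≤ 2 * L := by
  unfold jb at h
  have h0 : (0:ℝ) ≤ 1 + u ^ 2 := by positivity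
  have h1 : 1 + u ^ 2 ≤ (2 * L) ^ 2 := by
    nlinarith [Real.sq_sqrt h0, Real.sqrt_nonneg (1 + u ^ 2)]
  nlinarith [sq_abs u, abs_nonneg u]

set_option maxHeartbeats 1000000 in
theorem stmt_8 (c : ℝ) (hc0 : 0 < c) (hc1 : c < 1) :
    ∃ C : ℝ, 0 < C ∧
      ∀ (L₁ L₂ δ : ℝ) (τ : ℝ) (ξ ξ' : EuclideanSpace ℝ (Fin 2)) (A : ℝ)
        (s₁ s₂ : ℝ),
        1 ≤ L₁ → 1 ≤ L₂ → 0 < δ →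
        (s₁ = 1 ∨ s₁ = -1) → (s₂ = 1 ∨ s₂ = -1) →
        2 ^ 10 / Real.sqrt (1 - c) ≤ A →
        volume {p : ℝ × EuclideanSpace ℝ (Fin 2) |
            ‖p.2 - ξ'‖ ≤ δ ∧
            jb ((τ - p.1) + s₁ * (c * ‖ξ - p.2‖)) ≤ 2 * L₁ ∧
            jb (p.1 + s₂ * ‖p.2‖) ≤ 2 * L₂ ∧
            ‖p.2‖ * Real.cos (Real.pi / A) ≤ p.2 0} ≤
          ENNReal.ofReal (C * δ * L₁ * L₂) := by
  have h1c : 0 < 1 - c := by linarith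
  refine ⟨256 / (1 - c), by positivity, ?_⟩
  intro L₁ L₂ δ τ ξ ξ' A s₁ s₂ hL₁ hL₂ hδ hs₁ hs₂ hA
  -- the cosine lower bound
  have hsqrtpos : 0 < Real.sqrt (1 - c) := Real.sqrt_pos.mpr h1c
  have hsqrtle : Real.sqrt (1 - c) ≤ 1 := by
    have := Real.sqrt_le_sqrt (show 1 - c ≤ 1 by linarith)
    rwa [Real.sqrt_one] at this
  have hApos : 0 < A := lt_of_lt_of_le (by positivity) hA
  set θ := Real.pi / A with hθdef
  have hθpos : 0 < θ := div_pos Real.pi_pos hApos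
  have hA' : (2:ℝ) ^ 10 ≤ A * Real.sqrt (1 - c) := (div_le_iff₀ hsqrtpos).mp hA
  have hθle : θ ≤ Real.pi * Real.sqrt (1 - c) / 2 ^ 10 := by
    rw [hθdef, div_le_div_iff₀ hApos (by positivity)]
    nlinarith [mul_le_mul_of_nonneg_left hA' (le_of_lt Real.pi_pos)]
  have hθsq : θ ^ 2 ≤ Real.pi ^ 2 * (1 - c) / 2 ^ 20 := by
    have h := Real.sq_sqrt (le_of_lt h1c)
    have h2 := mul_le_mul hθle hθle (le_of_lt hθpos) (by positivity)
    nlinarith [h2, h]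
  have hcosθ : c + (1 - c) / 2 ≤ Real.cos θ := by
    have h := Real.one_sub_sq_div_two_le_cos (x := θ)
    have hpisq : Real.pi ^ 2 ≤ 16 := by nlinarith [Real.pi_pos, Real.pi_le_four]
    have hpi16c : Real.pi ^ 2 * (1 - c) ≤ 16 * (1 - c) :=
      mul_le_mul_of_nonneg_right hpisq (le_of_lt h1c)
    linarith [h, hθsq, hpi16c]
  have hccos : c < Real.cos θ := by linarith
  have hm : (1 - c) / 2 ≤ Real.cos θ - c := by linarith
  have hmpos : 0 < Real.cos θ - c := by linarith
  -- the set and its measurability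
  set S : Set (ℝ × EuclideanSpace ℝ (Fin 2)) :=
    {p : ℝ × EuclideanSpace ℝ (Fin 2) |
      ‖p.2 - ξ'‖ ≤ δ ∧
      jb ((τ - p.1) + s₁ * (c * ‖ξ - p.2‖)) ≤ 2 * L₁ ∧
      jb (p.1 + s₂ * ‖p.2‖) ≤ 2 * L₂ ∧
      ‖p.2‖ * Real.cos (Real.pi / A) ≤ p.2 0} with hSdef
  have hcoord : Continuous fun v : EuclideanSpace ℝ (Fin 2) => v 0 := (continuous_apply 0).comp (PiLp.continuous_ofLp 2 _)
  have hSm : MeasurableSet S := by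
    have m1 : Measurable fun p : ℝ × EuclideanSpace ℝ (Fin 2) => ‖p.2 - ξ'‖ :=
      (measurable_snd.sub measurable_const).norm
    have m2 : Measurable fun p : ℝ × EuclideanSpace ℝ (Fin 2) =>
        jb ((τ - p.1) + s₁ * (c * ‖ξ - p.2‖)) :=
      continuous_jb.measurable.comp ((measurable_const.sub measurable_fst).add
        (((measurable_const.sub measurable_snd).norm.const_mul c).const_mul s₁))
    have m3 : Measurable fun p : ℝ × EuclideanSpace ℝ (Fin 2) => jb (p.1 + s₂ * ‖p.2‖) :=
      continuous_jb.measurable.comp (measurable_fst.add (measurable_snd.norm.const_mul s₂))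
    have m4a : Measurable fun p : ℝ × EuclideanSpace ℝ (Fin 2) => ‖p.2‖ * Real.cos (Real.pi / A) :=
      measurable_snd.norm.mul_const _
    have m4b : Measurable fun p : ℝ × EuclideanSpace ℝ (Fin 2) => p.2 0 :=
      hcoord.measurable.comp measurable_snd
    exact (measurableSet_le m1 measurable_const).inter
      ((measurableSet_le m2 measurable_const).inter
        ((measurableSet_le m3 measurable_const).inter (measurableSet_le m4a m4b)))
  -- the measure-preserving reparametrization
  set Φ : ℝ × ℝ × ℝ → ℝ × EuclideanSpace ℝ (Fin 2) := fun q => (q.2.2, e2 (q.2.1, q.1)) with hΦdef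
  have mpΦ : MeasurePreserving Φ volume volume := by
    have h1 : MeasurePreserving (Prod.map (id : ℝ → ℝ) (Prod.swap : ℝ × ℝ → ℝ × ℝ))
        volume volume := (MeasurePreserving.id _).prod Measure.measurePreserving_swap
    have h2 : MeasurePreserving (Prod.swap : ℝ × (ℝ × ℝ) → (ℝ × ℝ) × ℝ) volume volume :=
      Measure.measurePreserving_swap
    have h3 : MeasurePreserving (⇑(MeasurableEquiv.prodAssoc) : (ℝ × ℝ) × ℝ → ℝ × ℝ × ℝ)
        volume volume := volume_preserving_prodAssoc
    have h4 : MeasurePreserving (Prod.map (id : ℝ → ℝ) e2) volume volume :=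
      (MeasurePreserving.id _).prod e2_mp
    have hcomp := h4.comp (h3.comp (h2.comp h1))
    have : Φ = (Prod.map (id : ℝ → ℝ) e2) ∘ (⇑MeasurableEquiv.prodAssoc) ∘
        (Prod.swap : ℝ × (ℝ × ℝ) → (ℝ × ℝ) × ℝ) ∘ (Prod.map (id : ℝ → ℝ) (Prod.swap : ℝ × ℝ → ℝ × ℝ)) := by
      funext q; rfl
    rwa [← this] at hcomp
  rw [← mpΦ.measure_preimage hSm.nullMeasurableSet]
  set T : Set (ℝ × ℝ × ℝ) := Φ ⁻¹' S with hTdef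
  have hTm : MeasurableSet T := hSm.preimage mpΦ.measurable
  -- parameters
  set R : ℝ := 8 * (L₁ + L₂) / (1 - c) with hRdef
  set Kt : ℝ≥0∞ := ENNReal.ofReal (min (4 * L₁) (4 * L₂)) with hKtdef
  set Kxy : ℝ≥0∞ := Kt * ENNReal.ofReal (2 * R) with hKxydef
  -- the section estimate
  have hsec : ∀ y : ℝ, volume (Prod.mk y ⁻¹' T) ≤
      (Set.Icc (ξ' 1 - δ) (ξ' 1 + δ)).indicator (fun _ => Kxy) y := by
    intro y
    by_cases hy : (Prod.mk y ⁻¹' T).Nonempty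
    · obtain ⟨⟨x₀, t₀⟩, hp₀⟩ := hy
      have hp₀' : (t₀, e2 (x₀, y)) ∈ S := hp₀
      have hyIcc : y ∈ Set.Icc (ξ' 1 - δ) (ξ' 1 + δ) := by
        have h := hp₀'.1
        have h2 := coord_le_norm (e2 (x₀, y) - ξ') 1
        rw [sub_apply2, e2_apply_one] at h2
        have : |y - ξ' 1| ≤ δ := le_trans h2 h
        rw [Set.mem_Icc]
        constructor <;> [linarith [abs_le.mp this |>.1]; linarith [abs_le.mp this |>.2]]
      rw [Set.indicator_of_mem hyIcc]
      have hsecm : MeasurableSet (Prod.mk y ⁻¹' T) := hTm.preimage measurable_prodMk_left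
      rw [Measure.volume_eq_prod, Measure.prod_apply hsecm]
      -- conditions at the base point x₀
      have hbase₀ : |τ + s₂ * ‖e2 (x₀, y)‖ + s₁ * (c * ‖ξ - e2 (x₀, y)‖)| ≤ 2 * (L₁ + L₂) := by
        have h1 := abs_le_of_jb _ _ hL₁ hp₀'.2.1
        have h2 := abs_le_of_jb _ _ hL₂ hp₀'.2.2.1
        have : τ + s₂ * ‖e2 (x₀, y)‖ + s₁ * (c * ‖ξ - e2 (x₀, y)‖) =
            ((τ - t₀) + s₁ * (c * ‖ξ - e2 (x₀, y)‖)) + (t₀ + s₂ * ‖e2 (x₀, y)‖) := by ring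
        rw [this]
        calc _ ≤ |(τ - t₀) + s₁ * (c * ‖ξ - e2 (x₀, y)‖)| + |t₀ + s₂ * ‖e2 (x₀, y)‖| := abs_add_le _ _
        _ ≤ _ := by linarith
      have hang₀ : ‖e2 (x₀, y)‖ * Real.cos θ ≤ x₀ := hp₀'.2.2.2
      -- the inner estimate
      have hinner : ∀ x : ℝ, volume (Prod.mk x ⁻¹' (Prod.mk y ⁻¹' T)) ≤
          (Set.Icc (x₀ - R) (x₀ + R)).indicator (fun _ => Kt) x := by
        intro x
        by_cases hx : (Prod.mk x ⁻¹' (Prod.mk y ⁻¹' T)).Nonempty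
        · obtain ⟨t, ht⟩ := hx
          have ht' : (t, e2 (x, y)) ∈ S := ht
          have hbase : |τ + s₂ * ‖e2 (x, y)‖ + s₁ * (c * ‖ξ - e2 (x, y)‖)| ≤ 2 * (L₁ + L₂) := by
            have h1 := abs_le_of_jb _ _ hL₁ ht'.2.1
            have h2 := abs_le_of_jb _ _ hL₂ ht'.2.2.1
            have : τ + s₂ * ‖e2 (x, y)‖ + s₁ * (c * ‖ξ - e2 (x, y)‖) =
                ((τ - t) + s₁ * (c * ‖ξ - e2 (x, y)‖)) + (t + s₂ * ‖e2 (x, y)‖) := by ring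
            rw [this]
            calc _ ≤ |(τ - t) + s₁ * (c * ‖ξ - e2 (x, y)‖)| + |t + s₂ * ‖e2 (x, y)‖| := abs_add_le _ _
            _ ≤ _ := by linarith
          have hang : ‖e2 (x, y)‖ * Real.cos θ ≤ x := ht'.2.2.2
          have hdiam := key_diam c θ τ (2 * (L₁ + L₂)) y hc0 hccos s₁ s₂ hs₁ hs₂ ξ x₀ x
            hang₀ hang hbase₀ hbase
          have hxIcc : x ∈ Set.Icc (x₀ - R) (x₀ + R) := by
            have hRR : 2 * (2 * (L₁ + L₂)) / (Real.cos θ - c) ≤ R := by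
              rw [hRdef, div_le_div_iff₀ hmpos h1c]
              nlinarith
            have := abs_le.mp (le_trans hdiam hRR)
            rw [Set.mem_Icc]; constructor <;> linarith [this.1, this.2]
          rw [Set.indicator_of_mem hxIcc]
          -- the t-section is contained in short intervals
          have hsub1 : (Prod.mk x ⁻¹' (Prod.mk y ⁻¹' T)) ⊆
              Set.Icc (τ + s₁ * (c * ‖ξ - e2 (x, y)‖) - 2 * L₁)
                (τ + s₁ * (c * ‖ξ - e2 (x, y)‖) + 2 * L₁) := by
            intro u hu
            have hu' : (u, e2 (x, y)) ∈ S := hu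
            have h1 := abs_le.mp (abs_le_of_jb _ _ hL₁ hu'.2.1)
            rw [Set.mem_Icc]; constructor <;> [linarith [h1.2]; linarith [h1.1]]
          have hsub2 : (Prod.mk x ⁻¹' (Prod.mk y ⁻¹' T)) ⊆
              Set.Icc (-(s₂ * ‖e2 (x, y)‖) - 2 * L₂) (-(s₂ * ‖e2 (x, y)‖) + 2 * L₂) := by
            intro u hu
            have hu' : (u, e2 (x, y)) ∈ S := hu
            have h1 := abs_le.mp (abs_le_of_jb _ _ hL₂ hu'.2.2.1)
            rw [Set.mem_Icc]; constructor <;> [linarith [h1.2]; linarith [h1.1]]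
          have b1 : volume (Prod.mk x ⁻¹' (Prod.mk y ⁻¹' T)) ≤ ENNReal.ofReal (4 * L₁) := by
            refine le_trans (measure_mono hsub1) ?_
            rw [Real.volume_Icc]
            exact ENNReal.ofReal_le_ofReal (by linarith)
          have b2 : volume (Prod.mk x ⁻¹' (Prod.mk y ⁻¹' T)) ≤ ENNReal.ofReal (4 * L₂) := by
            refine le_trans (measure_mono hsub2) ?_
            rw [Real.volume_Icc]
            exact ENNReal.ofReal_le_ofReal (by linarith)
          rw [hKtdef]
          rcases le_total L₁ L₂ with h | h
          · rw [min_eq_left (by linarith)]; exact b1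
          · rw [min_eq_right (by linarith)]; exact b2
        · rw [Set.not_nonempty_iff_eq_empty.mp hx]
          simp
      calc ∫⁻ x, volume (Prod.mk x ⁻¹' (Prod.mk y ⁻¹' T)) ≤
          ∫⁻ x, (Set.Icc (x₀ - R) (x₀ + R)).indicator (fun _ => Kt) x := lintegral_mono hinner
      _ = Kt * volume (Set.Icc (x₀ - R) (x₀ + R)) := lintegral_indicator_const measurableSet_Icc _
      _ = Kxy := by
          rw [Real.volume_Icc, show x₀ + R - (x₀ - R) = 2 * R by ring, hKxydef]
    · rw [Set.not_nonempty_iff_eq_empty.mp hy]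
      simp
  -- put everything together
  calc volume T = ∫⁻ y, volume (Prod.mk y ⁻¹' T) ∂volume := by
        rw [Measure.volume_eq_prod, Measure.prod_apply hTm]
  _ ≤ ∫⁻ y, (Set.Icc (ξ' 1 - δ) (ξ' 1 + δ)).indicator (fun _ => Kxy) y ∂volume :=
        lintegral_mono hsec
  _ = Kxy * volume (Set.Icc (ξ' 1 - δ) (ξ' 1 + δ)) := lintegral_indicator_const measurableSet_Icc _
  _ = Kxy * ENNReal.ofReal (2 * δ) := by
        rw [Real.volume_Icc, show ξ' 1 + δ - (ξ' 1 - δ) = 2 * δ by ring]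
  _ ≤ ENNReal.ofReal (256 / (1 - c) * δ * L₁ * L₂) := by
        rw [hKxydef, hKtdef, ← ENNReal.ofReal_mul (by positivity), ← ENNReal.ofReal_mul (by positivity)]
        refine ENNReal.ofReal_le_ofReal ?_
        have hmin : min (4 * L₁) (4 * L₂) * (L₁ + L₂) ≤ 8 * (L₁ * L₂) := by
          rcases le_total L₁ L₂ with h | h
          · rw [min_eq_left (by linarith)]; nlinarith
          · rw [min_eq_right (by linarith)]; nlinarith
        have e1 : min (4 * L₁) (4 * L₂) * (2 * R) * (2 * δ) =
            (min (4 * L₁) (4 * L₂) * (L₁ + L₂)) * (32 * δ) / (1 - c) := by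
          rw [hRdef]; field_simp; ring
        have e2 : 256 / (1 - c) * δ * L₁ * L₂ = (8 * (L₁ * L₂)) * (32 * δ) / (1 - c) := by
          field_simp; ring
        rw [e1, e2]
        have h32 : (0:ℝ) ≤ 32 * δ := by linarith
        gcongr
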